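/- Let N ∈ ℕ, N ≥ 1, let K = ℝ₊ × ℝ₋ × ℝ₊ × ℝ₋ ⊂ ℝ⁴ with Euclidean projection P_K, let c_{ij} ∈ ℝ for i, j ∈ {0, …, N−1}, and define φ : ℝ^{N×N} × (ℝ⁴)^{N×N} → ℝ by φ(θ, v) = Σ_{i,j} e^{θ_{ij} + ‖P_K v_{ij}‖²/2 + c_{ij}}. Then φ is convex and differentiable, and for every θ ∈ ℝ^{N×N} and every v ∈ (ℝ⁴)^{N×N} with v_{ij} ∈ ℝ₋ × ℝ₊ × ℝ₋ × ℝ₊ for all i, j (so that P_K v_{ij} = 0), one has ∇φ(θ, v) = ∇φ(θ, 0); in particular ⟨∇φ(θ, v) − ∇φ(θ, 0), (θ, v) − (θ, 0)⟩ = 0. Consequently, for every M > 0 and every μ > 0, φ is not μ-strongly convex on the open ball of radius M centered at (θ, 0). -/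

import Mathlib

open Classical

lemma hasDerivAt_maxsq (x : ℝ) : HasDerivAt (fun y : ℝ => max y 0 ^ 2) (2 * max x 0) x := by
  rcases lt_trichotomy x 0 with hx | hx | hx
  · have h0 : HasDerivAt (fun _ : ℝ => (0:ℝ)) 0 x := hasDerivAt_const x 0
    have heq : (fun y : ℝ => max y 0 ^ 2) =ᶠ[nhds x] fun _ => (0:ℝ) := by
      filter_upwards [Iio_mem_nhds hx] with y hy
      rw [max_eq_right (Set.mem_Iio.mp hy).le]
      norm_num
    have := h0.congr_of_eventuallyEq heq
    simpa [max_eq_right hx.le] using this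
  · subst hx
    rw [hasDerivAt_iff_isLittleO, Asymptotics.isLittleO_iff]
    intro ε hε
    filter_upwards [Metric.ball_mem_nhds (0:ℝ) hε] with y hy
    have h1 : |y| < ε := by simpa [Real.dist_eq] using hy
    have hnn : (0:ℝ) ≤ max y 0 ^ 2 := by positivity
    have h2 : max y 0 ^ 2 ≤ ε * |y| := by
      rcases le_total y 0 with h | h
      · rw [max_eq_right h]
        have : (0:ℝ) ≤ ε * |y| := by positivity
        simpa using this
      · rw [max_eq_left h]
        have hy' : y < ε := by rw [abs_of_nonneg h] at h1; exact h1
        nlinarith [abs_of_nonneg h]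
    simpa [Real.norm_eq_abs, abs_of_nonneg hnn] using h2
  · have h0 : HasDerivAt (fun y : ℝ => y ^ 2) (2 * x) x := by
      simpa using (hasDerivAt_pow 2 x)
    have heq : (fun y : ℝ => max y 0 ^ 2) =ᶠ[nhds x] fun y => y ^ 2 := by
      filter_upwards [Ioi_mem_nhds hx] with y hy
      rw [max_eq_left (Set.mem_Ioi.mp hy).le]
    have := h0.congr_of_eventuallyEq heq
    simpa [max_eq_left hx.le] using this

lemma maxneg_eq (y : ℝ) : max (-y) 0 = - min y 0 := by
  rcases le_total y 0 with h | h
  · rw [min_eq_left h, max_eq_left (by linarith)]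
  · rw [min_eq_right h, max_eq_right (by linarith), neg_zero]

lemma hasDerivAt_minsq (x : ℝ) : HasDerivAt (fun y : ℝ => min y 0 ^ 2) (2 * min x 0) x := by
  have h1 := (hasDerivAt_maxsq (-x)).comp x (hasDerivAt_neg x)
  have heq : ((fun y : ℝ => max y 0 ^ 2) ∘ Neg.neg) = fun y : ℝ => min y 0 ^ 2 := by
    funext y
    show max (-y) 0 ^ 2 = min y 0 ^ 2
    rw [maxneg_eq, neg_sq]
  rw [heq] at h1
  have : 2 * max (-x) 0 * (-1) = 2 * min x 0 := by rw [maxneg_eq]; ring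
  rwa [this] at h1

/-- The per-coordinate squared-projection function. -/
noncomputable def hk (k : Fin 4) (x : ℝ) : ℝ :=
  if k = 0 ∨ k = 2 then max x 0 ^ 2 else min x 0 ^ 2

/-- Its derivative. -/
noncomputable def hk' (k : Fin 4) (x : ℝ) : ℝ :=
  if k = 0 ∨ k = 2 then 2 * max x 0 else 2 * min x 0

lemma hasDerivAt_hk (k : Fin 4) (x : ℝ) : HasDerivAt (hk k) (hk' k x) x := by
  by_cases hc : k = 0 ∨ k = 2
  · have h1 : hk k = fun x : ℝ => max x 0 ^ 2 := by funext y; simp [hk, hc]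
    have h2 : hk' k x = 2 * max x 0 := by simp [hk', hc]
    rw [h1, h2]; exact hasDerivAt_maxsq x
  · have h1 : hk k = fun x : ℝ => min x 0 ^ 2 := by funext y; simp [hk, hc]
    have h2 : hk' k x = 2 * min x 0 := by simp [hk', hc]
    rw [h1, h2]; exact hasDerivAt_minsq x

lemma differentiable_hk (k : Fin 4) : Differentiable ℝ (hk k) :=
  fun x => (hasDerivAt_hk k x).differentiableAt

lemma convexOn_hk (k : Fin 4) : ConvexOn ℝ Set.univ (hk k) := by
  apply Monotone.convexOn_univ_of_deriv (differentiable_hk k)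
  have hder : deriv (hk k) = hk' k := funext fun x => (hasDerivAt_hk k x).deriv
  rw [hder]
  intro a b hab
  unfold hk'
  split_ifs
  · exact mul_le_mul_of_nonneg_left (max_le_max hab le_rfl) (by norm_num)
  · exact mul_le_mul_of_nonneg_left (min_le_min hab le_rfl) (by norm_num)

set_option maxHeartbeats 1000000 in
/-- **Failure of local strong convexity of the dual function in the first-order MFG
example.**
Let `K = ℝ₊ × ℝ₋ × ℝ₊ × ℝ₋ ⊆ ℝ⁴` with Euclidean projection `P_K` (given explicitly
componentwise), `c_{ij} ∈ ℝ`, and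
`φ(θ, v) = Σ_{i,j} exp(θ_{ij} + ‖P_K v_{ij}‖²/2 + c_{ij})`.
Then `φ` is convex and differentiable; for every `θ` and every `v` with
`v_{ij} ∈ ℝ₋ × ℝ₊ × ℝ₋ × ℝ₊` for all `i,j` (so `P_K v_{ij} = 0`) one has
`∇φ(θ, v) = ∇φ(θ, 0)` (stated via Fréchet derivatives), hence
`⟪∇φ(θ,v) − ∇φ(θ,0), (θ,v) − (θ,0)⟫ = 0`; consequently, for all `M > 0` and `μ > 0`,
`φ` is not `μ`-strongly convex on the (Euclidean) open ball of radius `M` centered at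
`(θ, 0)`, i.e. `φ − (μ/2)‖·‖²` is not convex there. -/
theorem stmt18 (N : ℕ) (hN : 1 ≤ N) (c : Fin N → Fin N → ℝ)
    (pK : (Fin 4 → ℝ) → (Fin 4 → ℝ))
    (hpK : ∀ w : Fin 4 → ℝ,
      pK w = fun i : Fin 4 => if i = 0 ∨ i = 2 then max (w i) 0 else min (w i) 0)
    (φ : ((Fin N → Fin N → ℝ) × (Fin N → Fin N → Fin 4 → ℝ)) → ℝ)
    (hφ : ∀ (θ : Fin N → Fin N → ℝ) (v : Fin N → Fin N → Fin 4 → ℝ),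
      φ (θ, v) = ∑ i : Fin N, ∑ j : Fin N,
        Real.exp (θ i j + (∑ k : Fin 4, pK (v i j) k ^ 2) / 2 + c i j)) :
    ConvexOn ℝ Set.univ φ ∧ Differentiable ℝ φ ∧
    ∀ (θ : Fin N → Fin N → ℝ) (v : Fin N → Fin N → Fin 4 → ℝ),
      (∀ i j, v i j 0 ≤ 0 ∧ 0 ≤ v i j 1 ∧ v i j 2 ≤ 0 ∧ 0 ≤ v i j 3) →
      (∀ i j, pK (v i j) = 0) ∧
      fderiv ℝ φ (θ, v) = fderiv ℝ φ (θ, 0) ∧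
      (fderiv ℝ φ (θ, v) - fderiv ℝ φ (θ, 0)) ((θ, v) - (θ, 0)) = 0 ∧
      ∀ M μ : ℝ, 0 < M → 0 < μ →
        ¬ ConvexOn ℝ
            {p : (Fin N → Fin N → ℝ) × (Fin N → Fin N → Fin 4 → ℝ) |
              (∑ i : Fin N, ∑ j : Fin N, (p.1 i j - θ i j) ^ 2) +
                (∑ i : Fin N, ∑ j : Fin N, ∑ k : Fin 4, p.2 i j k ^ 2) < M ^ 2}
            (fun p => φ p - μ / 2 *
              ((∑ i : Fin N, ∑ j : Fin N, p.1 i j ^ 2) +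
                (∑ i : Fin N, ∑ j : Fin N, ∑ k : Fin 4, p.2 i j k ^ 2))) := by
  -- rewrite φ in terms of hk
  have sumpk : ∀ w : Fin 4 → ℝ, ∑ k : Fin 4, pK w k ^ 2 = ∑ k : Fin 4, hk k (w k) := by
    intro w
    rw [hpK]
    refine Finset.sum_congr rfl fun k _ => ?_
    by_cases hc : k = 0 ∨ k = 2 <;> simp [hk, hc]
  have hAe : φ = fun p => ∑ i : Fin N, ∑ j : Fin N,
      Real.exp (p.1 i j + (∑ k : Fin 4, hk k (p.2 i j k)) / 2 + c i j) := by
    funext p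
    rw [show φ p = φ (p.1, p.2) from rfl, hφ]
    simp only [sumpk]
  -- projection vanishing
  have pzero : ∀ u : Fin 4 → ℝ, u 0 ≤ 0 → 0 ≤ u 1 → u 2 ≤ 0 → 0 ≤ u 3 → pK u = 0 := by
    intro u h0 h1 h2 h3
    rw [hpK]
    funext k
    fin_cases k
    · simpa using max_eq_right h0
    · simpa using min_eq_right h1
    · simpa using max_eq_right h2
    · simpa using min_eq_right h3
  -- convexity
  have hconv : ConvexOn ℝ Set.univ φ := by
    rw [hAe]
    refine ⟨convex_univ, ?_⟩
    intro p _ q _ a b ha hb hab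
    obtain rfl : b = 1 - a := by linarith
    simp only [smul_eq_mul, Finset.mul_sum, ← Finset.sum_add_distrib]
    refine Finset.sum_le_sum fun i _ => Finset.sum_le_sum fun j _ => ?_
    have hpq1 : (a • p + (1 - a) • q).1 i j = a * p.1 i j + (1 - a) * q.1 i j := rfl
    have hpq2 : ∀ k : Fin 4, (a • p + (1 - a) • q).2 i j k
        = a * p.2 i j k + (1 - a) * q.2 i j k := fun k => rfl
    have hs : ∑ k : Fin 4, hk k ((a • p + (1 - a) • q).2 i j k)
        ≤ a * (∑ k : Fin 4, hk k (p.2 i j k)) + (1 - a) * (∑ k : Fin 4, hk k (q.2 i j k)) := by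
      rw [Finset.mul_sum, Finset.mul_sum, ← Finset.sum_add_distrib]
      refine Finset.sum_le_sum fun k _ => ?_
      have := (convexOn_hk k).2 (Set.mem_univ (p.2 i j k)) (Set.mem_univ (q.2 i j k)) ha hb hab
      simpa [hpq2 k, smul_eq_mul] using this
    have h1 : (a • p + (1 - a) • q).1 i j
          + (∑ k : Fin 4, hk k ((a • p + (1 - a) • q).2 i j k)) / 2 + c i j
        ≤ a * (p.1 i j + (∑ k : Fin 4, hk k (p.2 i j k)) / 2 + c i j)
          + (1 - a) * (q.1 i j + (∑ k : Fin 4, hk k (q.2 i j k)) / 2 + c i j) := by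
      rw [hpq1]; nlinarith [hs]
    refine le_trans (Real.exp_le_exp.2 h1) ?_
    have := convexOn_exp.2 (Set.mem_univ (p.1 i j + (∑ k : Fin 4, hk k (p.2 i j k)) / 2 + c i j))
      (Set.mem_univ (q.1 i j + (∑ k : Fin 4, hk k (q.2 i j k)) / 2 + c i j)) ha hb hab
    simpa [smul_eq_mul] using this
  -- differentiability
  have hdiff : Differentiable ℝ φ := by
    rw [hAe]
    refine Differentiable.fun_sum fun i _ => Differentiable.fun_sum fun j _ => ?_
    refine Real.differentiable_exp.comp ?_
    refine Differentiable.add (Differentiable.add ?_ ?_) (differentiable_const _)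
    · exact differentiable_pi.mp ((differentiable_pi.mp differentiable_fst) i) j
    · simp only [div_eq_mul_inv]
      refine Differentiable.mul ?_ (differentiable_const _)
      refine Differentiable.fun_sum fun k _ => ?_
      exact (differentiable_hk k).comp
        (differentiable_pi.mp (differentiable_pi.mp ((differentiable_pi.mp differentiable_snd) i) j) k)
  refine ⟨hconv, hdiff, ?_⟩
  intro θ v hv
  -- the common derivative
  set E : Fin N → Fin N → (((Fin N → Fin N → ℝ) × (Fin N → Fin N → Fin 4 → ℝ)) →L[ℝ] ℝ) :=
    fun i j => (ContinuousLinearMap.proj (R := ℝ) (φ := fun _ : Fin N => ℝ) j).comp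
      (((ContinuousLinearMap.proj (R := ℝ) (φ := fun _ : Fin N => Fin N → ℝ) i).comp
        (ContinuousLinearMap.fst ℝ (Fin N → Fin N → ℝ) (Fin N → Fin N → Fin 4 → ℝ)))) with hE
  have main : ∀ (u : Fin N → Fin N → Fin 4 → ℝ),
      (∀ i j, u i j 0 ≤ 0 ∧ 0 ≤ u i j 1 ∧ u i j 2 ≤ 0 ∧ 0 ≤ u i j 3) →
      HasFDerivAt φ (∑ i : Fin N, ∑ j : Fin N, Real.exp (θ i j + c i j) • E i j) (θ, u) := by
    intro u hu
    have hk'z : ∀ (k : Fin 4) (i j : Fin N), hk' k (u i j k) = 0 := by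
      intro k i j
      obtain ⟨h0, h1, h2, h3⟩ := hu i j
      fin_cases k
      · simp [hk', max_eq_right h0]
      · simp [hk', min_eq_right h1]
      · simp [hk', max_eq_right h2]
      · simp [hk', min_eq_right h3]
    have hkz : ∀ (k : Fin 4) (i j : Fin N), hk k (u i j k) = 0 := by
      intro k i j
      obtain ⟨h0, h1, h2, h3⟩ := hu i j
      fin_cases k
      · simp [hk, max_eq_right h0]
      · simp [hk, min_eq_right h1]
      · simp [hk, max_eq_right h2]
      · simp [hk, min_eq_right h3]
    rw [hAe]
    refine HasFDerivAt.fun_sum fun i _ => HasFDerivAt.fun_sum fun j _ => ?_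
    have hB : HasFDerivAt
        (fun p : (Fin N → Fin N → ℝ) × (Fin N → Fin N → Fin 4 → ℝ) => p.1 i j)
        (E i j) (θ, u) := by
      rw [hE]
      exact ((ContinuousLinearMap.proj (R := ℝ) (φ := fun _ : Fin N => ℝ) j).comp
        (((ContinuousLinearMap.proj (R := ℝ) (φ := fun _ : Fin N => Fin N → ℝ) i).comp
          (ContinuousLinearMap.fst ℝ (Fin N → Fin N → ℝ) (Fin N → Fin N → Fin 4 → ℝ))))).hasFDerivAt
    have hper : ∀ k : Fin 4, HasFDerivAt
        (fun p : (Fin N → Fin N → ℝ) × (Fin N → Fin N → Fin 4 → ℝ) => hk k (p.2 i j k))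
        (0 : ((Fin N → Fin N → ℝ) × (Fin N → Fin N → Fin 4 → ℝ)) →L[ℝ] ℝ) (θ, u) := by
      intro k
      have hproj : HasFDerivAt
          (fun p : (Fin N → Fin N → ℝ) × (Fin N → Fin N → Fin 4 → ℝ) => p.2 i j k)
          ((ContinuousLinearMap.proj (R := ℝ) (φ := fun _ : Fin 4 => ℝ) k).comp
            ((ContinuousLinearMap.proj (R := ℝ) (φ := fun _ : Fin N => Fin 4 → ℝ) j).comp
            ((ContinuousLinearMap.proj (R := ℝ) (φ := fun _ : Fin N => Fin N → Fin 4 → ℝ) i).comp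
              (ContinuousLinearMap.snd ℝ (Fin N → Fin N → ℝ) (Fin N → Fin N → Fin 4 → ℝ)))))
          (θ, u) :=
        ((ContinuousLinearMap.proj (R := ℝ) (φ := fun _ : Fin 4 => ℝ) k).comp
          ((ContinuousLinearMap.proj (R := ℝ) (φ := fun _ : Fin N => Fin 4 → ℝ) j).comp
          ((ContinuousLinearMap.proj (R := ℝ) (φ := fun _ : Fin N => Fin N → Fin 4 → ℝ) i).comp
            (ContinuousLinearMap.snd ℝ (Fin N → Fin N → ℝ) (Fin N → Fin N → Fin 4 → ℝ))))).hasFDerivAt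
      have hd : HasDerivAt (hk k) 0 (u i j k) := by
        have := hasDerivAt_hk k (u i j k)
        rwa [hk'z k i j] at this
      have := hd.comp_hasFDerivAt (θ, u) hproj
      simpa [Function.comp_def] using this
    have hS : HasFDerivAt
        (fun p : (Fin N → Fin N → ℝ) × (Fin N → Fin N → Fin 4 → ℝ) =>
          ∑ k : Fin 4, hk k (p.2 i j k))
        (0 : ((Fin N → Fin N → ℝ) × (Fin N → Fin N → Fin 4 → ℝ)) →L[ℝ] ℝ) (θ, u) := by
      have := HasFDerivAt.fun_sum (fun k (_ : k ∈ Finset.univ) => hper k)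
      simpa using this
    have hS2 : HasFDerivAt
        (fun p : (Fin N → Fin N → ℝ) × (Fin N → Fin N → Fin 4 → ℝ) =>
          (∑ k : Fin 4, hk k (p.2 i j k)) / 2)
        (0 : ((Fin N → Fin N → ℝ) × (Fin N → Fin N → Fin 4 → ℝ)) →L[ℝ] ℝ) (θ, u) := by
      have h2 := hS.const_mul ((2:ℝ)⁻¹)
      have heq : (fun p : (Fin N → Fin N → ℝ) × (Fin N → Fin N → Fin 4 → ℝ) =>
          (∑ k : Fin 4, hk k (p.2 i j k)) / 2)
          = fun p => (2:ℝ)⁻¹ * (∑ k : Fin 4, hk k (p.2 i j k)) := by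
        funext p; ring
      rw [heq]
      simpa using h2
    have hA : HasFDerivAt
        (fun p : (Fin N → Fin N → ℝ) × (Fin N → Fin N → Fin 4 → ℝ) =>
          p.1 i j + (∑ k : Fin 4, hk k (p.2 i j k)) / 2 + c i j)
        (E i j) (θ, u) := by
      have := (hB.add hS2).add_const (c i j)
      simpa using this
    have hexp := (Real.hasDerivAt_exp
      (θ i j + (∑ k : Fin 4, hk k (u i j k)) / 2 + c i j)).comp_hasFDerivAt (θ, u) hA
    have hval : θ i j + (∑ k : Fin 4, hk k (u i j k)) / 2 + c i j = θ i j + c i j := by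
      have hz : (∑ k : Fin 4, hk k (u i j k)) = 0 :=
        Finset.sum_eq_zero fun k _ => hkz k i j
      rw [hz]; ring
    rw [hval] at hexp
    exact hexp
  have hv0 : ∀ i j : Fin N, (0 : Fin N → Fin N → Fin 4 → ℝ) i j 0 ≤ 0 ∧
      0 ≤ (0 : Fin N → Fin N → Fin 4 → ℝ) i j 1 ∧ (0 : Fin N → Fin N → Fin 4 → ℝ) i j 2 ≤ 0 ∧
      0 ≤ (0 : Fin N → Fin N → Fin 4 → ℝ) i j 3 := by
    intro i j; norm_num
  have hf1 := (main v hv).fderiv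
  have hf2 := (main 0 hv0).fderiv
  have hfeq : fderiv ℝ φ (θ, v) = fderiv ℝ φ (θ, 0) := by rw [hf1, hf2]
  refine ⟨?_, hfeq, ?_, ?_⟩
  · intro i j
    obtain ⟨h0, h1, h2, h3⟩ := hv i j
    exact pzero _ h0 h1 h2 h3
  · rw [hfeq, sub_self]
    simp
  -- non strong convexity
  intro M μ hM hμ hcx
  set i0 : Fin N := ⟨0, hN⟩ with hi0
  set w : Fin N → Fin N → Fin 4 → ℝ :=
    fun i j k => if (i = i0 ∧ j = i0) ∧ k = 1 then M / 2 else 0 with hw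
  set A := ∑ i : Fin N, ∑ j : Fin N, Real.exp (θ i j + c i j) with hA2
  have φval : ∀ u : Fin N → Fin N → Fin 4 → ℝ, (∀ i j, pK (u i j) = 0) → φ (θ, u) = A := by
    intro u hu
    rw [hφ]
    refine Finset.sum_congr rfl fun i _ => Finset.sum_congr rfl fun j _ => ?_
    rw [hu i j]
    norm_num
  have hwsign : ∀ (t : ℝ), 0 ≤ t → ∀ i j, pK (fun k => t * w i j k) = 0 := by
    intro t ht i j
    refine pzero _ ?_ ?_ ?_ ?_ <;> simp [hw] <;> split_ifs <;> positivity
  have hw0 : ∀ i j, pK ((0 : Fin N → Fin N → Fin 4 → ℝ) i j) = 0 := by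
    intro i j
    refine pzero _ ?_ ?_ ?_ ?_ <;> norm_num
  -- sums of squares
  have hsumw : ∀ t : ℝ, ∑ i : Fin N, ∑ j : Fin N, ∑ k : Fin 4, (t * w i j k) ^ 2
      = (t * (M / 2)) ^ 2 := by
    intro t
    simp [hw, Fin.sum_univ_four, ite_and, Finset.sum_ite_eq', mul_ite, mul_zero]
  have hθ0 : ∑ i : Fin N, ∑ j : Fin N, (θ i j - θ i j) ^ 2 = 0 := by simp
  -- membership
  have hx : ((θ, 0) : (Fin N → Fin N → ℝ) × (Fin N → Fin N → Fin 4 → ℝ)) ∈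
      {p : (Fin N → Fin N → ℝ) × (Fin N → Fin N → Fin 4 → ℝ) |
        (∑ i : Fin N, ∑ j : Fin N, (p.1 i j - θ i j) ^ 2) +
          (∑ i : Fin N, ∑ j : Fin N, ∑ k : Fin 4, p.2 i j k ^ 2) < M ^ 2} := by
    simp only [Set.mem_setOf_eq, hθ0]
    norm_num
    positivity
  have hy : ((θ, w) : (Fin N → Fin N → ℝ) × (Fin N → Fin N → Fin 4 → ℝ)) ∈
      {p : (Fin N → Fin N → ℝ) × (Fin N → Fin N → Fin 4 → ℝ) |
        (∑ i : Fin N, ∑ j : Fin N, (p.1 i j - θ i j) ^ 2) +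
          (∑ i : Fin N, ∑ j : Fin N, ∑ k : Fin 4, p.2 i j k ^ 2) < M ^ 2} := by
    simp only [Set.mem_setOf_eq, hθ0]
    have h1 := hsumw 1
    simp only [one_mul] at h1
    rw [h1]
    nlinarith
  have key := hcx.2 hx hy (by norm_num : (0:ℝ) ≤ 1/2) (by norm_num : (0:ℝ) ≤ 1/2) (by norm_num)
  have hmid : (1/2 : ℝ) • ((θ, 0) : (Fin N → Fin N → ℝ) × (Fin N → Fin N → Fin 4 → ℝ))
      + (1/2 : ℝ) • ((θ, w) : (Fin N → Fin N → ℝ) × (Fin N → Fin N → Fin 4 → ℝ))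
      = (θ, fun i j k => (1/2 : ℝ) * w i j k) := by
    refine Prod.ext ?_ ?_
    · show (1/2 : ℝ) • θ + (1/2 : ℝ) • θ = θ
      rw [← add_smul]; norm_num
    · funext i j k
      show (1/2 : ℝ) * (0 : ℝ) + (1/2 : ℝ) * w i j k = (1/2 : ℝ) * w i j k
      ring
  rw [hmid] at key
  -- compute the three values
  have hvx : φ (θ, (0 : Fin N → Fin N → Fin 4 → ℝ)) = A := φval 0 hw0
  have hvy : φ (θ, w) = A := by
    refine φval w fun i j => ?_
    have := hwsign 1 (by norm_num) i j
    simpa using this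
  have hvz : φ (θ, fun i j k => (1/2 : ℝ) * w i j k) = A :=
    φval _ fun i j => hwsign (1/2) (by norm_num) i j
  simp only [smul_eq_mul] at key
  -- the quadratic parts
  set Qθ := ∑ i : Fin N, ∑ j : Fin N, θ i j ^ 2 with hQθ
  have e0 : ∑ i : Fin N, ∑ j : Fin N, ∑ k : Fin 4,
      ((0 : Fin N → Fin N → Fin 4 → ℝ)) i j k ^ 2 = 0 := by simp
  have e1 : ∑ i : Fin N, ∑ j : Fin N, ∑ k : Fin 4, w i j k ^ 2 = (M/2)^2 := by
    have := hsumw 1; simpa using this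
  have e2 : ∑ i : Fin N, ∑ j : Fin N, ∑ k : Fin 4,
      ((fun i j k => (1/2 : ℝ) * w i j k) : Fin N → Fin N → Fin 4 → ℝ) i j k ^ 2
      = ((1/2) * (M/2))^2 := hsumw (1/2)
  rw [hvx, hvy, hvz, e0, e1, e2] at key
  nlinarith [key, sq_nonneg M, mul_pos hμ (mul_pos hM hM)]
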